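/- The probability of the event Erasure_A equals K! · (1−p) · C(q−1, K−1) · ( p/(q−1) )^{K−1}. -/

import Mathlib

open scoped BigOperators Classical

/-- Number of coordinates of `y` equal to the symbol `a`. -/
def cntY {A : Type*} [DecidableEq A] {K : ℕ} (y : Fin K → A) (a : A) : ℕ :=
  (Finset.univ.filter fun j => y j = a).card

/-- Erasure_A: the coordinates of `y` are pairwise distinct and some coordinate equals `c`. -/
def IsErasureA {A : Type*} {K : ℕ} (c : A) (y : Fin K → A) : Prop :=
  Function.Injective y ∧ ∃ j, y j = c

/-- Erasure_B: the coordinates of `y` are pairwise distinct and no coordinate equals `c`. -/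
def IsErasureB {A : Type*} {K : ℕ} (c : A) (y : Fin K → A) : Prop :=
  Function.Injective y ∧ ∀ j, y j ≠ c

/-- Success: some symbol occurs at least twice, strictly more often than every other symbol,
and that symbol equals `c`. -/
def IsSuccess {A : Type*} [DecidableEq A] {K : ℕ} (c : A) (y : Fin K → A) : Prop :=
  2 ≤ cntY y c ∧ ∀ a, a ≠ c → cntY y a < cntY y c

/-- Error: the complement of Erasure_A ∪ Erasure_B ∪ Success. -/
def IsError {A : Type*} [DecidableEq A] {K : ℕ} (c : A) (y : Fin K → A) : Prop :=
  ¬(IsErasureA c y ∨ IsErasureB c y ∨ IsSuccess c y)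

/-- Probability of the event `E` for a random vector `Y ∈ A^K` with i.i.d. coordinates,
each equal to `c` with probability `1 − p` and equal to each other fixed symbol with
probability `p/(q−1)`. -/
noncomputable def prEvent {A : Type*} [Fintype A] [DecidableEq A] (q K : ℕ) (p : ℝ)
    (c : A) (E : (Fin K → A) → Prop) : ℝ :=
  ∑ y : Fin K → A,
    (∏ j : Fin K, (if y j = c then 1 - p else p / ((q : ℝ) - 1))) *
      (if E y then 1 else 0)


section aux

variable {A : Type*} [Fintype A] [DecidableEq A]

/-- injective functions avoiding `c` correspond to embeddings into the complement. -/
def avoidEquiv {K : ℕ} (c : A) :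
    {y : Fin K → A // Function.Injective y ∧ ∀ j, y j ≠ c} ≃ (Fin K ↪ {a : A // a ≠ c}) where
  toFun y := ⟨fun j => ⟨y.1 j, y.2.2 j⟩, fun i i' h => y.2.1 (congrArg Subtype.val h)⟩
  invFun f := ⟨fun j => (f j).1, fun i i' h => f.injective (Subtype.ext h), fun j => (f j).2⟩
  left_inv y := rfl
  right_inv f := rfl

lemma card_injective {K : ℕ} :
    (Finset.univ.filter fun y : Fin K → A => Function.Injective y).card =
      (Fintype.card A).descFactorial K := by
  rw [← Fintype.card_subtype]
  rw [Fintype.card_congr (Equiv.subtypeInjectiveEquivEmbedding (Fin K) A)]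
  rw [Fintype.card_embedding_eq, Fintype.card_fin]

lemma card_avoid {K : ℕ} (c : A) :
    (Finset.univ.filter fun y : Fin K → A =>
        Function.Injective y ∧ ∀ j, y j ≠ c).card =
      (Fintype.card A - 1).descFactorial K := by
  rw [← Fintype.card_subtype]
  rw [Fintype.card_congr (avoidEquiv c)]
  rw [Fintype.card_embedding_eq, Fintype.card_fin]
  congr 1
  have : Fintype.card {a : A // a ≠ c} = Fintype.card A - Fintype.card {a : A // a = c} :=
    Fintype.card_subtype_compl _
  rw [this, Fintype.card_subtype_eq]

lemma card_erasureA (q K : ℕ) (hK : 2 ≤ K) (hq : K < q) (hA : Fintype.card A = q) (c : A) :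
    (Finset.univ.filter fun y : Fin K → A => IsErasureA c y).card =
      K.factorial * (q - 1).choose (K - 1) := by
  have hsplit :
      (Finset.univ.filter fun y : Fin K → A => IsErasureA c y).card +
        (Finset.univ.filter fun y : Fin K → A =>
          Function.Injective y ∧ ∀ j, y j ≠ c).card =
      (Finset.univ.filter fun y : Fin K → A => Function.Injective y).card := by
    rw [← Finset.card_union_of_disjoint]
    · congr 1
      ext y
      simp only [Finset.mem_union, Finset.mem_filter, Finset.mem_univ, true_and]
      unfold IsErasureA
      constructor
      · rintro (⟨h1, _⟩ | ⟨h1, _⟩) <;> exact h1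
      · intro h
        by_cases hc : ∃ j, y j = c
        · exact Or.inl ⟨h, hc⟩
        · push_neg at hc
          exact Or.inr ⟨h, hc⟩
    · rw [Finset.disjoint_left]
      rintro y hy hy'
      simp only [Finset.mem_filter] at hy hy'
      unfold IsErasureA at hy
      obtain ⟨-, -, j, hj⟩ := hy
      exact hy'.2.2 j hj
  rw [card_injective, card_avoid, hA] at hsplit
  obtain ⟨k, rfl⟩ : ∃ k, K = k + 1 := ⟨K - 1, by omega⟩
  obtain ⟨n, rfl⟩ : ∃ n, q = n + 1 := ⟨q - 1, by omega⟩
  have hnk : k ≤ n := by omega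
  rw [Nat.succ_descFactorial_succ, Nat.add_sub_cancel, Nat.descFactorial_succ] at hsplit
  have : (Finset.univ.filter fun y : Fin (k+1) → A => IsErasureA c y).card =
      (k + 1) * n.descFactorial k := by
    have h2 : (n + 1) * n.descFactorial k - (n - k) * n.descFactorial k
        = (k + 1) * n.descFactorial k := by
      rw [← Nat.sub_mul]
      congr 1
      omega
    omega
  rw [this, Nat.descFactorial_eq_factorial_mul_choose, Nat.add_sub_cancel, Nat.add_sub_cancel,
    ← mul_assoc, Nat.factorial_succ]

end aux

theorem stmt4 {A : Type*} [Fintype A] [DecidableEq A] (q K : ℕ)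
    (hK : 2 ≤ K) (hq : K < q) (p : ℝ) (hp : p ∈ Set.Ioo (0 : ℝ) 1)
    (hA : Fintype.card A = q) (c : A) :
    prEvent q K p c (IsErasureA c) =
      (K.factorial : ℝ) * (1 - p) * (Nat.choose (q - 1) (K - 1) : ℝ) *
        (p / ((q : ℝ) - 1)) ^ (K - 1) := by
  rw [prEvent]
  have step1 : ∀ y : Fin K → A,
      (∏ j : Fin K, (if y j = c then 1 - p else p / ((q : ℝ) - 1))) *
        (if IsErasureA c y then 1 else 0) =
      if IsErasureA c y then
        (∏ j : Fin K, (if y j = c then 1 - p else p / ((q : ℝ) - 1))) else 0 := by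
    intro y; split <;> simp
  simp_rw [step1]
  rw [← Finset.sum_filter]
  have step2 : ∀ y ∈ Finset.univ.filter fun y : Fin K → A => IsErasureA c y,
      (∏ j : Fin K, (if y j = c then 1 - p else p / ((q : ℝ) - 1))) =
        (1 - p) * (p / ((q : ℝ) - 1)) ^ (K - 1) := by
    intro y hy
    rw [Finset.mem_filter] at hy
    obtain ⟨-, hinj, j, hj⟩ := hy
    rw [Fintype.prod_eq_mul_prod_compl j, if_pos hj]
    congr 1
    rw [Finset.prod_congr rfl (fun i hi => ?_), Finset.prod_const, Finset.card_compl,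
      Finset.card_singleton, Fintype.card_fin]
    rw [if_neg]
    intro h
    rw [Finset.mem_compl, Finset.mem_singleton] at hi
    exact hi (hinj (h.trans hj.symm))
  rw [Finset.sum_congr rfl step2, Finset.sum_const, nsmul_eq_mul,
    card_erasureA q K hK hq hA c]
  push_cast
  ring
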